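/- Let d \ge 2, let f : \mathbb{R}^d \to \mathbb{R} be a nonzero linear functional, and let U^+ be a nonempty convex subset of \mathbb{R}^d which is closed under multiplication by positive scalars (x \in U^+ and c > 0 imply c \cdot x \in U^+) and satisfies f(x) > 0 for all x \in U^+. Let H^+ = S^{d-1} \cap \{x : f(x) \ge 0\} be the closed hemisphere and S^{d-2} = S^{d-1} \cap \{x : f(x) = 0\} the equatorial sphere, where S^{d-1} is the unit sphere in \mathbb{R}^d. Then S^{d-2} is a deformation retract of H^+ \setminus U^+; in particular, H^+ \setminus U^+ is homotopy equivalent to S^{d-2}. -/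

import Mathlib

/-- The closed hemisphere `H⁺ = S^{d-1} ∩ {x : f x ≥ 0}` determined by the linear
functional `f`, minus the set `U⁺`. -/
def hemisphereDiff (d : ℕ) (f : EuclideanSpace ℝ (Fin d) →ₗ[ℝ] ℝ)
    (U : Set (EuclideanSpace ℝ (Fin d))) : Set (EuclideanSpace ℝ (Fin d)) :=
  (Metric.sphere (0 : EuclideanSpace ℝ (Fin d)) 1 ∩ {x | 0 ≤ f x}) \ U

/-- The equatorial sphere `S^{d-2} = S^{d-1} ∩ {x : f x = 0}` determined by the
linear functional `f`. -/
def equatorialSphere (d : ℕ) (f : EuclideanSpace ℝ (Fin d) →ₗ[ℝ] ℝ) :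
    Set (EuclideanSpace ℝ (Fin d)) :=
  Metric.sphere (0 : EuclideanSpace ℝ (Fin d)) 1 ∩ {x | f x = 0}

/-- Let `f` be a nonzero linear functional on `ℝ^d` (`d ≥ 2`) and `U⁺` a nonempty
convex subset, closed under multiplication by positive scalars, on which `f` is
positive.  Then the equatorial sphere `S^{d-1} ∩ {f = 0}` is a deformation retract
of `H⁺ \ U⁺`, where `H⁺ = S^{d-1} ∩ {f ≥ 0}`; in particular the two spaces are
homotopy equivalent. -/
theorem equator_deformation_retract_of_hemisphere_diff
    (d : ℕ) (hd : 2 ≤ d) (f : EuclideanSpace ℝ (Fin d) →ₗ[ℝ] ℝ) (hf : f ≠ 0)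
    (U : Set (EuclideanSpace ℝ (Fin d))) (hne : U.Nonempty) (hconv : Convex ℝ U)
    (hcone : ∀ x ∈ U, ∀ c : ℝ, 0 < c → c • x ∈ U)
    (hpos : ∀ x ∈ U, 0 < f x) :
    (∃ H : ↥(hemisphereDiff d f U) × unitInterval → ↥(hemisphereDiff d f U),
      Continuous H ∧
      (∀ x : ↥(hemisphereDiff d f U), H (x, 0) = x) ∧
      (∀ x : ↥(hemisphereDiff d f U),
        (H (x, 1) : EuclideanSpace ℝ (Fin d)) ∈ equatorialSphere d f) ∧
      (∀ x : ↥(hemisphereDiff d f U),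
        (x : EuclideanSpace ℝ (Fin d)) ∈ equatorialSphere d f → H (x, 1) = x)) ∧
    Nonempty (ContinuousMap.HomotopyEquiv
      ↥(hemisphereDiff d f U) ↥(equatorialSphere d f)) := by
  classical
  obtain ⟨u, huU⟩ := hne
  have hfu : 0 < f u := hpos u huU
  have hfu' : f u ≠ 0 := ne_of_gt hfu
  have hadd : ∀ a ∈ U, ∀ b ∈ U, a + b ∈ U := by
    intro a ha b hb
    have h2 : ((1:ℝ)/2) • a + ((1:ℝ)/2) • b ∈ U :=
      hconv ha hb (by norm_num) (by norm_num) (by norm_num)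
    have h3 := hcone _ h2 2 (by norm_num)
    have : (2:ℝ) • (((1:ℝ)/2) • a + ((1:ℝ)/2) • b) = a + b := by
      rw [smul_add, smul_smul, smul_smul]; norm_num
    rwa [this] at h3
  set g : EuclideanSpace ℝ (Fin d) → ℝ → EuclideanSpace ℝ (Fin d) :=
    fun x t => x - (t * (f x / f u)) • u with hgdef
  have hfg : ∀ x t, f (g x t) = (1 - t) * f x := by
    intro x t
    simp only [hgdef, map_sub, map_smul, smul_eq_mul]
    field_simp
  -- facts about members of hemisphereDiff
  have hmem : ∀ x ∈ hemisphereDiff d f U, ∀ t ∈ Set.Icc (0:ℝ) 1,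
      g x t ≠ 0 ∧ (‖g x t‖)⁻¹ • g x t ∈ hemisphereDiff d f U := by
    rintro x ⟨⟨hxs, hxf⟩, hxU⟩ t ⟨ht0, ht1⟩
    have hxn : ‖x‖ = 1 := mem_sphere_zero_iff_norm.mp hxs
    have hxf' : (0:ℝ) ≤ f x := hxf
    have hs0 : 0 ≤ t * (f x / f u) :=
      mul_nonneg ht0 (div_nonneg hxf' (le_of_lt hfu))
    have hg0 : g x t ≠ 0 := by
      intro h0
      have hx : x = (t * (f x / f u)) • u := by
        have := sub_eq_zero.mp (by simpa [hgdef] using h0)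
        exact this
      rcases eq_or_lt_of_le hs0 with hs | hs
      · rw [← hs, zero_smul] at hx
        rw [hx] at hxn; simp at hxn
      · exact hxU (hx ▸ hcone u huU _ hs)
    refine ⟨hg0, ?_⟩
    have hgn : ‖g x t‖ ≠ 0 := norm_ne_zero_iff.mpr hg0
    have hgn' : 0 < ‖g x t‖ := norm_pos_iff.mpr hg0
    refine ⟨⟨?_, ?_⟩, ?_⟩
    · rw [mem_sphere_zero_iff_norm, norm_smul, norm_inv, norm_norm,
        inv_mul_cancel₀ hgn]
    · show (0:ℝ) ≤ f ((‖g x t‖)⁻¹ • g x t)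
      rw [map_smul, smul_eq_mul, hfg]
      have : (0:ℝ) ≤ (1 - t) * f x := mul_nonneg (by linarith) hxf'
      positivity
    · intro hzU
      have hgU : g x t ∈ U := by
        have := hcone _ hzU ‖g x t‖ hgn'
        rwa [smul_smul, mul_inv_cancel₀ hgn, one_smul] at this
      rcases eq_or_lt_of_le hs0 with hs | hs
      · apply hxU
        have : g x t = x := by rw [hgdef]; simp [← hs]
        rwa [this] at hgU
      · apply hxU
        have hxeq : x = g x t + (t * (f x / f u)) • u := by
          rw [hgdef]; module
        rw [hxeq]
        exact hadd _ hgU _ (hcone u huU _ hs)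
  -- the homotopy
  have hmemD : ∀ (x : ↥(hemisphereDiff d f U)) (t : unitInterval),
      (‖g x.1 t.1‖)⁻¹ • g x.1 t.1 ∈ hemisphereDiff d f U :=
    fun x t => (hmem x.1 x.2 t.1 t.2).2
  have hne0 : ∀ (x : ↥(hemisphereDiff d f U)) (t : unitInterval),
      g x.1 t.1 ≠ 0 := fun x t => (hmem x.1 x.2 t.1 t.2).1
  set H : ↥(hemisphereDiff d f U) × unitInterval → ↥(hemisphereDiff d f U) :=
    fun p => ⟨(‖g p.1.1 p.2.1‖)⁻¹ • g p.1.1 p.2.1, hmemD p.1 p.2⟩ with hHdef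
  have hfc : Continuous f := f.continuous_of_finiteDimensional
  have hgc : Continuous (fun p : ↥(hemisphereDiff d f U) × unitInterval =>
      g p.1.1 p.2.1) := by
    apply Continuous.sub
    · exact continuous_subtype_val.comp continuous_fst
    · exact Continuous.smul
        ((continuous_subtype_val.comp continuous_snd).mul
          ((hfc.comp (continuous_subtype_val.comp continuous_fst)).div_const _))
        continuous_const
  have hHc : Continuous H := by
    apply Continuous.subtype_mk
    exact ((hgc.norm).inv₀ (fun p => norm_ne_zero_iff.mpr (hne0 p.1 p.2))).smul hgc
  have hH0 : ∀ x, H (x, 0) = x := by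
    intro x
    have hxn : ‖(x:EuclideanSpace ℝ (Fin d))‖ = 1 :=
      mem_sphere_zero_iff_norm.mp x.2.1.1
    apply Subtype.ext
    show (‖g x.1 (0:ℝ)‖)⁻¹ • g x.1 (0:ℝ) = x.1
    have : g x.1 (0:ℝ) = x.1 := by simp [hgdef]
    rw [this, hxn]; simp
  have hHfix : ∀ x : ↥(hemisphereDiff d f U), f x.1 = 0 → ∀ t : unitInterval,
      H (x, t) = x := by
    intro x hx0 t
    have hxn : ‖(x:EuclideanSpace ℝ (Fin d))‖ = 1 :=
      mem_sphere_zero_iff_norm.mp x.2.1.1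
    apply Subtype.ext
    show (‖g x.1 t.1‖)⁻¹ • g x.1 t.1 = x.1
    have : g x.1 t.1 = x.1 := by simp [hgdef, hx0]
    rw [this, hxn]; simp
  have hH1 : ∀ x : ↥(hemisphereDiff d f U),
      (H (x, 1) : EuclideanSpace ℝ (Fin d)) ∈ equatorialSphere d f := by
    intro x
    refine ⟨(H (x, 1)).2.1.1, ?_⟩
    show f ((‖g x.1 (1:ℝ)‖)⁻¹ • g x.1 (1:ℝ)) = 0
    rw [map_smul, smul_eq_mul, hfg]
    ring
  -- the retraction and inclusion
  have hsub : equatorialSphere d f ⊆ hemisphereDiff d f U := by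
    rintro y ⟨hys, hyf⟩
    exact ⟨⟨hys, le_of_eq hyf.symm⟩, fun hyU => absurd hyf (ne_of_gt (hpos y hyU))⟩
  set r : C(↥(hemisphereDiff d f U), ↥(equatorialSphere d f)) :=
    ⟨fun x => ⟨(H (x, 1) : EuclideanSpace ℝ (Fin d)), hH1 x⟩, by
      apply Continuous.subtype_mk
      exact continuous_subtype_val.comp
        (hHc.comp (continuous_id.prodMk continuous_const))⟩ with hrdef
  set ι : C(↥(equatorialSphere d f), ↥(hemisphereDiff d f U)) :=
    ⟨fun y => ⟨y.1, hsub y.2⟩, by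
      apply Continuous.subtype_mk
      exact continuous_subtype_val⟩ with hιdef
  have hri : r.comp ι = ContinuousMap.id _ := by
    apply ContinuousMap.ext
    intro y
    apply Subtype.ext
    show ((H (⟨y.1, hsub y.2⟩, 1) : ↥(hemisphereDiff d f U)) :
      EuclideanSpace ℝ (Fin d)) = y.1
    rw [hHfix ⟨y.1, hsub y.2⟩ y.2.2 1]
  have hhom : (ι.comp r).Homotopic (ContinuousMap.id _) := by
    refine ⟨(ContinuousMap.Homotopy.symm
      { toFun := fun p => H (p.2, p.1)
        continuous_toFun := hHc.comp (continuous_snd.prodMk continuous_fst)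
        map_zero_left := fun x => hH0 x
        map_one_left := fun x => Subtype.ext rfl })⟩
  have hrinv : (r.comp ι).Homotopic (ContinuousMap.id _) := by
    rw [hri]
  have heq : ContinuousMap.HomotopyEquiv
      ↥(hemisphereDiff d f U) ↥(equatorialSphere d f) :=
    { toFun := r
      invFun := ι
      left_inv := hhom
      right_inv := hrinv }
  exact ⟨⟨H, hHc, hH0, hH1, fun x hx => hHfix x hx.2 1⟩, ⟨heq⟩⟩
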